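/- arXiv:2304.05676 — 3 statements merged into one kernel-verified Lean document; each statement's English description precedes it below -/
import Mathlib

section
/- Let 0 ≤ β < 1 and α, λ ≥ 0. Then |ρ(θ)| ≤ 1 for all θ ∈ [-π, π] if and only if α + λ ≤ 1, where ρ(θ) = (α(exp(-iθ)-1) + 1 - β + λ(exp(iθ)-1)) / (1 - β·exp(-iθ)). -/
open Real Complex

noncomputable def ampFactor (α β lam : ℝ) (θ : ℝ) : ℂ :=
  ((α : ℂ) * (Complex.exp (-(Complex.I * θ)) - 1) + 1 - (β : ℂ)
      + (lam : ℂ) * (Complex.exp (Complex.I * θ) - 1)) /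
    (1 - (β : ℂ) * Complex.exp (-(Complex.I * θ)))

lemma key_ineq (α β lam c : ℝ) (hα : 0 ≤ α) (hlam : 0 ≤ lam) (hβ0 : 0 ≤ β)
    (hσ : α + lam ≤ 1) (hc1 : -1 ≤ c) (hc2 : c ≤ 1) :
    (1 - β - (α+lam)*(1-c))^2 + (lam-α)^2*(1-c^2) ≤ (1-β*c)^2 + β^2*(1-c^2) := by
  nlinarith [mul_nonneg (mul_nonneg (by nlinarith : (0:ℝ) ≤ 1-c^2) hβ0) (by linarith : (0:ℝ) ≤ 1-(α+lam)),
    mul_nonneg (mul_nonneg (by nlinarith : (0:ℝ) ≤ 1-c^2) (by linarith : (0:ℝ) ≤ α+lam)) (by linarith : (0:ℝ) ≤ 1-(α+lam)),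
    mul_nonneg (by nlinarith : (0:ℝ) ≤ 1-c^2) (mul_nonneg hα hlam),
    mul_nonneg (mul_nonneg (sq_nonneg (1-c)) (by linarith : (0:ℝ) ≤ 1-(α+lam))) (by linarith : (0:ℝ) ≤ β+(α+lam))]

theorem stmt_3 (α β lam : ℝ) (hα : 0 ≤ α) (hlam : 0 ≤ lam)
    (hβ0 : 0 ≤ β) (hβ1 : β < 1) :
    (∀ θ ∈ Set.Icc (-Real.pi) Real.pi, ‖ampFactor α β lam θ‖ ≤ 1)
      ↔ α + lam ≤ 1 := by
  constructor
  · intro h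
    have hπ := h π ⟨by linarith [Real.pi_pos], le_refl _⟩
    have e1 : Complex.exp (-(Complex.I * (π:ℝ))) = -1 := by
      rw [mul_comm, Complex.exp_neg, Complex.exp_pi_mul_I]
      norm_num
    have e2 : Complex.exp (Complex.I * (π:ℝ)) = -1 := by
      rw [mul_comm, Complex.exp_pi_mul_I]
    have hne : (1:ℂ) - (β:ℂ) * (-1) ≠ 0 := by
      rw [mul_neg_one, sub_neg_eq_add]
      intro hz
      have : (1:ℝ) + β = 0 := by exact_mod_cast hz
      linarith
    have hval : ampFactor α β lam π = ((((1:ℝ) - β - 2*α - 2*lam)/(1+β) : ℝ) : ℂ) := by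
      unfold ampFactor
      rw [e1, e2]
      push_cast
      rw [div_eq_div_iff hne (by
        intro hz
        have : (1:ℝ) + β = 0 := by exact_mod_cast hz
        linarith)]
      ring
    rw [hval, Complex.norm_real, Real.norm_eq_abs, abs_div, abs_of_pos (by linarith : (0:ℝ) < 1+β),
      div_le_one (by linarith : (0:ℝ) < 1+β), abs_le] at hπ
    linarith [hπ.1]
  · intro hσ θ _
    set E := Complex.exp (-(Complex.I * θ)) with hE
    have hEabs : ‖(β:ℂ) * E‖ = β := by
      rw [norm_mul, Complex.norm_exp, Complex.norm_real, Real.norm_eq_abs, _root_.abs_of_nonneg hβ0]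
      simp
    have hdpos : 0 < ‖1 - (β:ℂ) * E‖ := by
      have := norm_sub_norm_le (1 : ℂ) ((β:ℂ) * E)
      simp only [norm_one, hEabs] at this
      linarith
    unfold ampFactor
    rw [norm_div, div_le_one hdpos, Complex.norm_def, Complex.norm_def]
    apply Real.sqrt_le_sqrt
    have hnum : Complex.normSq ((α : ℂ) * (Complex.exp (-(Complex.I * θ)) - 1) + 1 - (β : ℂ)
        + (lam : ℂ) * (Complex.exp (Complex.I * θ) - 1)) =
        (1 - β - (α+lam)*(1-Real.cos θ))^2 + (lam-α)^2*(Real.sin θ)^2 := by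
      simp [Complex.normSq_apply, Complex.exp_re, Complex.exp_im, Complex.mul_re,
        Complex.mul_im]
      ring
    have hden : Complex.normSq (1 - (β:ℂ) * Complex.exp (-(Complex.I * θ))) =
        (1 - β*Real.cos θ)^2 + β^2*(Real.sin θ)^2 := by
      simp [Complex.normSq_apply, Complex.exp_re, Complex.exp_im, Complex.mul_re,
        Complex.mul_im]
      ring
    rw [hE, hnum, hden, Real.sin_sq]
    exact key_ineq α β lam (Real.cos θ) hα hlam hβ0 hσ (Real.neg_one_le_cos θ) (Real.cos_le_one θ)
end

section
/- Let 0 ≤ β < 1, α, λ > 0 with α + λ < 1. Then |ρ(θ)| < 1 for all θ ∈ [-π, π] \ {0}, and ρ(0) = 1. -/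
open Real Complex

theorem stmt_4 (α β lam : ℝ) (hα : 0 < α) (hlam : 0 < lam)
    (hβ0 : 0 ≤ β) (hβ1 : β < 1) (hsum : α + lam < 1) :
    (∀ θ ∈ Set.Icc (-Real.pi) Real.pi, θ ≠ 0 →
      ‖ampFactor α β lam θ‖ < 1) ∧
    ampFactor α β lam 0 = 1 := by
  constructor
  · intro θ hθ hθ0
    set c := Real.cos θ with hc
    set s := Real.sin θ with hs
    have h1 : Complex.exp (Complex.I * θ) = (c : ℂ) + (s : ℂ) * Complex.I := by
      rw [mul_comm, Complex.exp_mul_I]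
      simp [hc, hs]
    have h2 : Complex.exp (-(Complex.I * θ)) = (c : ℂ) - (s : ℂ) * Complex.I := by
      have : -(Complex.I * (θ : ℂ)) = ((-θ : ℝ) : ℂ) * Complex.I := by push_cast; ring
      rw [this, Complex.exp_mul_I]
      push_cast
      simp [hc, hs, Real.cos_neg, Real.sin_neg]
      ring
    have hN : (α : ℂ) * (Complex.exp (-(Complex.I * θ)) - 1) + 1 - (β : ℂ)
        + (lam : ℂ) * (Complex.exp (Complex.I * θ) - 1)
        = ((α * (c - 1) + 1 - β + lam * (c - 1) : ℝ) : ℂ)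
          + (((lam - α) * s : ℝ) : ℂ) * Complex.I := by
      rw [h1, h2]; push_cast; ring
    have hD : 1 - (β : ℂ) * Complex.exp (-(Complex.I * θ))
        = ((1 - β * c : ℝ) : ℂ) + ((β * s : ℝ) : ℂ) * Complex.I := by
      rw [h2]; push_cast; ring
    have hc1 : c ≤ 1 := Real.cos_le_one θ
    have hclt : c < 1 := by
      rcases lt_or_eq_of_le hc1 with h | h
      · exact h
      · exfalso
        have h' : Real.cos θ = 1 := hc ▸ h
        have := Real.cos_eq_one_iff_of_lt_of_lt (x := θ) ?_ ?_ |>.mp h'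
        · exact hθ0 this
        · have := hθ.1; linarith [Real.pi_pos]
        · have := hθ.2; linarith [Real.pi_pos]
    have hcge : -1 ≤ c := Real.neg_one_le_cos θ
    have hs2 : s ^ 2 = (1 - c) * (1 + c) := by
      have := Real.sin_sq_add_cos_sq θ
      nlinarith
    have hA : 0 < (1 - c) * ((β + (α + lam)) * (1 - (α + lam))) := by
      apply mul_pos (by linarith)
      apply mul_pos (by linarith) (by linarith)
    have hB : 0 ≤ α * lam * s ^ 2 := by positivity
    have hineq : (α * (c - 1) + 1 - β + lam * (c - 1)) ^ 2 + ((lam - α) * s) ^ 2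
        < (1 - β * c) ^ 2 + (β * s) ^ 2 := by
      have hident : (1 - β * c) ^ 2 + (β * s) ^ 2
          - ((α * (c - 1) + 1 - β + lam * (c - 1)) ^ 2 + ((lam - α) * s) ^ 2)
          = 2 * ((1 - c) * ((β + (α + lam)) * (1 - (α + lam)))) + 4 * (α * lam * s ^ 2) := by
        linear_combination (β ^ 2 - (α + lam) ^ 2) * hs2
      linarith
    have hDpos : 0 < ‖1 - (β : ℂ) * Complex.exp (-(Complex.I * θ))‖ := by
      rw [hD]
      have : 0 < (1 - β * c) ^ 2 + (β * s) ^ 2 := by nlinarith [mul_le_of_le_one_right hβ0 hc1]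
      rw [Complex.norm_def, Complex.normSq_add_mul_I]
      positivity
    rw [ampFactor, norm_div, div_lt_one hDpos, hN, hD, Complex.norm_def,
      Complex.norm_def, Complex.normSq_add_mul_I, Complex.normSq_add_mul_I]
    exact Real.sqrt_lt_sqrt (by positivity) hineq
  · have : ampFactor α β lam 0 = ((1 : ℂ) - β) / (1 - β) := by
      simp [ampFactor]
    rw [this, div_self]
    intro h
    have : (β : ℂ) = 1 := by linear_combination -h
    have : β = (1 : ℝ) := by exact_mod_cast this
    linarith
end

section
/- Let 0 ≤ β < 1, α, λ > 0 with α + λ = 1. Then ρ(π) = -1 and ρ(-π) = -1, and |ρ(θ)| < 1 for all θ ∈ (-π, π) \ {0}. -/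
open Real Complex

theorem stmt_5 (α β lam : ℝ) (hα : 0 < α) (hlam : 0 < lam)
    (hβ0 : 0 ≤ β) (hβ1 : β < 1) (hsum : α + lam = 1) :
    ampFactor α β lam Real.pi = -1 ∧
    ampFactor α β lam (-Real.pi) = -1 ∧
    (∀ θ ∈ Set.Ioo (-Real.pi) Real.pi, θ ≠ 0 →
      ‖ampFactor α β lam θ‖ < 1) := by
  have hsC : (α : ℂ) + (lam : ℂ) = 1 := by exact_mod_cast hsum
  have hβne : (1 : ℂ) + (β : ℂ) ≠ 0 := by
    intro h
    have : (1 : ℝ) + β = 0 := by exact_mod_cast h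
    linarith
  have hepi : Complex.exp (Complex.I * (Real.pi : ℂ)) = -1 := by
    rw [mul_comm, Complex.exp_pi_mul_I]
  have hempi : Complex.exp (-(Complex.I * (Real.pi : ℂ))) = -1 := by
    rw [Complex.exp_neg, hepi]; norm_num
  refine ⟨?_, ?_, ?_⟩
  · rw [ampFactor]
    rw [hepi, hempi]
    rw [div_eq_iff (by rw [show (1 : ℂ) - β * (-1) = 1 + β by ring]; exact hβne)]
    linear_combination (-2 : ℂ) * hsC
  · rw [ampFactor]
    rw [show (((-Real.pi : ℝ)) : ℂ) = -(Real.pi : ℂ) by push_cast; ring,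
      show Complex.I * (-(Real.pi : ℂ)) = -(Complex.I * Real.pi) by ring,
      show -(-(Complex.I * (Real.pi : ℂ))) = Complex.I * Real.pi by ring, hepi, hempi]
    rw [div_eq_iff (by rw [show (1 : ℂ) - β * (-1) = 1 + β by ring]; exact hβne)]
    linear_combination (-2 : ℂ) * hsC
  · intro θ hθ hθ0
    obtain ⟨hθ1, hθ2⟩ := hθ
    have hs : Real.sin θ ≠ 0 := by
      intro h
      exact hθ0 ((Real.sin_eq_zero_iff_of_lt_of_lt hθ1 hθ2).mp h)
    set c := Real.cos θ with hc
    set s := Real.sin θ with hsdef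
    have h1 : Complex.exp (Complex.I * θ) = (c : ℂ) + (s : ℂ) * Complex.I := by
      rw [mul_comm, Complex.exp_mul_I, hc, hsdef, Complex.ofReal_cos, Complex.ofReal_sin]
    have h2 : Complex.exp (-(Complex.I * θ)) = (c : ℂ) - (s : ℂ) * Complex.I := by
      rw [show -(Complex.I * (θ : ℝ)) = ((-θ : ℝ) : ℂ) * Complex.I by push_cast; ring,
        Complex.exp_mul_I]
      push_cast
      rw [Complex.cos_neg, Complex.sin_neg, hc, hsdef, Complex.ofReal_cos,
        Complex.ofReal_sin]
      ring
    have hN : (α : ℂ) * (Complex.exp (-(Complex.I * θ)) - 1) + 1 - (β : ℂ)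
        + (lam : ℂ) * (Complex.exp (Complex.I * θ) - 1)
        = ((α * (c - 1) + 1 - β + lam * (c - 1) : ℝ) : ℂ)
          + ((lam - α) * s : ℝ) * Complex.I := by
      rw [h1, h2]; push_cast; ring
    have hD : (1 : ℂ) - (β : ℂ) * Complex.exp (-(Complex.I * θ))
        = ((1 - β * c : ℝ) : ℂ) + ((β * s : ℝ)) * Complex.I := by
      rw [h2]; push_cast; ring
    have hsc : s ^ 2 + c ^ 2 = 1 := Real.sin_sq_add_cos_sq θ
    have hs2 : 0 < s ^ 2 := by positivity
    have hsqlt : Complex.normSq ((α : ℂ) * (Complex.exp (-(Complex.I * θ)) - 1) + 1 - (β : ℂ)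
        + (lam : ℂ) * (Complex.exp (Complex.I * θ) - 1))
        < Complex.normSq ((1 : ℂ) - (β : ℂ) * Complex.exp (-(Complex.I * θ))) := by
      rw [hN, hD, Complex.normSq_add_mul_I, Complex.normSq_add_mul_I]
      have hl : lam = 1 - α := by linarith
      subst hl
      nlinarith [mul_pos (mul_pos hα hlam) hs2, hsc, sq_nonneg (β * s)]
    rw [ampFactor, norm_div]
    have hDpos : 0 < ‖(1 : ℂ) - (β : ℂ) * Complex.exp (-(Complex.I * θ))‖ := by
      have : Complex.normSq ((1 : ℂ) - (β : ℂ) * Complex.exp (-(Complex.I * θ))) ≠ 0 := by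
        intro h; rw [h] at hsqlt; exact absurd hsqlt (not_lt.2 (Complex.normSq_nonneg _))
      have := Complex.normSq_pos.mp (lt_of_le_of_ne (Complex.normSq_nonneg _) (Ne.symm this))
      exact norm_pos_iff.mpr this
    rw [div_lt_one hDpos]
    have h1' := Complex.sq_norm ((α : ℂ) * (Complex.exp (-(Complex.I * θ)) - 1) + 1 - (β : ℂ)
        + (lam : ℂ) * (Complex.exp (Complex.I * θ) - 1))
    have h2' := Complex.sq_norm ((1 : ℂ) - (β : ℂ) * Complex.exp (-(Complex.I * θ)))
    nlinarith [norm_nonneg ((α : ℂ) * (Complex.exp (-(Complex.I * θ)) - 1) + 1 - (β : ℂ)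
        + (lam : ℂ) * (Complex.exp (Complex.I * θ) - 1)),
      norm_nonneg ((1 : ℂ) - (β : ℂ) * Complex.exp (-(Complex.I * θ)))]
end
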